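/- Let F̃_m be the class of densities f̃(x,y) = f(x)·1{y=1} + (1-f(x))·1{y=0} on [0,1] × {0,1} (with respect to Lebesgue × counting measure), where f : [0,1] → [0,1] is a step function with at most m-1 change-points. Then for any δ > 0 the δ-upper bracketing entropy of F̃_m is at most (2m-1)·log(⌈m/δ⌉). -/

import Mathlib

open MeasureTheory Set

/-- The dominating measure on `[0,1] × {0,1}`: Lebesgue measure on `[0,1]` times counting
measure on the two labels. -/
noncomputable def nuMeas : Measure (ℝ × Bool) :=
  (volume.restrict (Icc (0:ℝ) 1)).prod Measure.count

/-- The binary-regression density associated to a regression function `f`. -/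
def ftilde (f : ℝ → ℝ) : ℝ × Bool → ℝ :=
  fun z => if z.2 then f z.1 else 1 - f z.1

/-- `f` is a step function on `[0,1]` with exactly `k` pieces (at most `k-1` change-points). -/
def IsStepWith (k : ℕ) (f : ℝ → ℝ) : Prop :=
  ∃ p : Fin (k + 1) → ℝ, Monotone p ∧ p 0 = 0 ∧ p (Fin.last k) = 1 ∧
    ∀ i : Fin k, ∀ x ∈ Ioo (p i.castSucc) (p i.succ), ∀ y ∈ Ioo (p i.castSucc) (p i.succ),
      f x = f y

namespace BracketAux

/-- index of the piece containing `x` (count of cut points `≤ x`). -/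
noncomputable def idxOf (N m' : ℕ) (q : Fin m' → Fin N) (x : ℝ) : ℕ :=
  (Finset.univ.filter (fun j : Fin m' => ((q j : ℕ) : ℝ) / N ≤ x)).card

/-- value of the upper bracket for label `true` on piece number `n`. -/
noncomputable def brT (N m' : ℕ) (v : Fin (m' + 1) → Fin N) (n : ℕ) : ℝ :=
  (((v ⟨min n m', Nat.lt_succ_of_le (min_le_right _ _)⟩ : ℕ) : ℝ) + 1) / N

lemma brT_le_one {N m' : ℕ} (hN : 1 ≤ N) (v : Fin (m' + 1) → Fin N) (n : ℕ) :
    brT N m' v n ≤ 1 := by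
  have hN' : (0:ℝ) < N := by exact_mod_cast hN
  rw [brT, div_le_one hN']
  have : ((v ⟨min n m', Nat.lt_succ_of_le (min_le_right _ _)⟩ : ℕ)) < N := Fin.is_lt _
  exact_mod_cast Nat.succ_le_of_lt this

lemma brT_pos {N m' : ℕ} (hN : 1 ≤ N) (v : Fin (m' + 1) → Fin N) (n : ℕ) :
    1 / (N:ℝ) ≤ brT N m' v n := by
  have hN' : (0:ℝ) < N := by exact_mod_cast hN
  rw [brT]
  gcongr
  linarith [Nat.cast_nonneg (α := ℝ) ((v ⟨min n m', Nat.lt_succ_of_le (min_le_right _ _)⟩ : ℕ))]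

lemma count_bool : (Measure.count : Measure Bool) = Measure.dirac true + Measure.dirac false := by
  rw [Measure.count, Measure.sum_fintype, Fintype.sum_bool]

lemma nuMeas_eq : nuMeas = (volume.restrict (Icc (0:ℝ) 1)).map (fun x => (x, true))
    + (volume.restrict (Icc (0:ℝ) 1)).map (fun x => (x, false)) := by
  rw [nuMeas, count_bool, Measure.prod_add, Measure.prod_dirac, Measure.prod_dirac]


open Classical in
/-- the upper bracket determined by cut data `q` and value data `v`. -/
noncomputable def stepU (N m' : ℕ) (q : Fin m' → Fin N) (v : Fin (m' + 1) → Fin N) :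
    (ℝ × Bool) → ℝ := fun z =>
  if ∃ j : Fin m', ((q j : ℕ) : ℝ) / N ≤ z.1 ∧ z.1 < (((q j : ℕ) : ℝ) + 1) / N then 1
  else if z.2 then brT N m' v (idxOf N m' q z.1)
  else 1 + 1 / (N : ℝ) - brT N m' v (idxOf N m' q z.1)

lemma measurable_idxOf (N m' : ℕ) (q : Fin m' → Fin N) : Measurable (idxOf N m' q) := by
  classical
  unfold idxOf
  simp_rw [Finset.card_filter]
  apply Finset.measurable_sum
  intro j _
  exact Measurable.ite (measurableSet_le measurable_const measurable_id) measurable_const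
    measurable_const

lemma measurable_stepU (N m' : ℕ) (q : Fin m' → Fin N) (v : Fin (m' + 1) → Fin N) :
    Measurable (stepU N m' q v) := by
  classical
  unfold stepU
  apply Measurable.ite
  · have : {z : ℝ × Bool | ∃ j : Fin m',
        ((q j : ℕ) : ℝ) / N ≤ z.1 ∧ z.1 < (((q j : ℕ) : ℝ) + 1) / N} =
        Prod.fst ⁻¹' (⋃ j : Fin m', Ico (((q j : ℕ) : ℝ) / N) ((((q j : ℕ) : ℝ) + 1) / N)) := by
      ext z; simp [Ico, mem_iUnion]
    rw [this]
    exact measurable_fst (MeasurableSet.iUnion fun j => measurableSet_Ico)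
  · exact measurable_const
  · apply Measurable.ite (p := fun z : ℝ × Bool => z.2 = true)
    · exact measurable_snd (by simp : MeasurableSet {b : Bool | b = true})
    · exact (measurable_from_nat (f := brT N m' v)).comp
        ((measurable_idxOf N m' q).comp measurable_fst)
    · apply Measurable.const_sub
      exact (measurable_from_nat (f := brT N m' v)).comp
        ((measurable_idxOf N m' q).comp measurable_fst)

lemma idxOf_le_card {N m' : ℕ} (q : Fin m' → Fin N) (x : ℝ) : idxOf N m' q x ≤ m' := by
  unfold idxOf
  exact le_trans (Finset.card_filter_le _ _) (by simp)

lemma idxOf_le {N m' : ℕ} {q : Fin m' → Fin N}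
    (hq : Monotone fun j : Fin m' => ((q j : ℕ):ℝ)/N) {x : ℝ} {j : Fin m'}
    (hj : (j:ℕ) < idxOf N m' q x) : ((q j : ℕ):ℝ)/N ≤ x := by
  by_contra hnot
  unfold idxOf at hj
  have hsub : ∀ j' : Fin m', j' ∈ Finset.univ.filter (fun j' : Fin m' => ((q j' : ℕ):ℝ)/N ≤ x) →
      (j':ℕ) ∈ Finset.range (j:ℕ) := by
    intro j' hj'
    have hle : ((q j' : ℕ):ℝ)/N ≤ x := (Finset.mem_filter.mp hj').2
    rw [Finset.mem_range]
    by_contra hge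
    exact hnot (le_trans (hq (show j ≤ j' from Fin.le_def.mpr (by omega))) hle)
  have hcard := Finset.card_le_card_of_injOn (fun j' : Fin m' => (j':ℕ)) hsub
    (Function.Injective.injOn Fin.val_injective)
  rw [Finset.card_range] at hcard
  omega

lemma idxOf_gt {N m' : ℕ} {q : Fin m' → Fin N}
    (hq : Monotone fun j : Fin m' => ((q j : ℕ):ℝ)/N) {x : ℝ} {j : Fin m'}
    (hj : idxOf N m' q x ≤ (j:ℕ)) : x < ((q j : ℕ):ℝ)/N := by
  rw [← not_le]
  intro hcj
  unfold idxOf at hj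
  have hsub : ∀ n : ℕ, n ∈ Finset.range ((j:ℕ)+1) →
      (⟨min n (j:ℕ), lt_of_le_of_lt (min_le_right _ _) j.isLt⟩ : Fin m') ∈
        Finset.univ.filter (fun j' : Fin m' => ((q j' : ℕ):ℝ)/N ≤ x) := by
    intro n _
    refine Finset.mem_filter.mpr ⟨Finset.mem_univ _, ?_⟩
    exact le_trans (hq (show _ ≤ j from Fin.le_def.mpr (by simp))) hcj
  have hinj : Set.InjOn (fun n : ℕ => (⟨min n (j:ℕ),
      lt_of_le_of_lt (min_le_right _ _) j.isLt⟩ : Fin m')) (Finset.range ((j:ℕ)+1)) := by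
    intro n hn n' hn' he
    have h1 : min n (j:ℕ) = min n' (j:ℕ) := congrArg Fin.val he
    rw [Finset.coe_range, Set.mem_Iio] at hn hn'
    omega
  have hcard := Finset.card_le_card_of_injOn _ hsub hinj
  rw [Finset.card_range] at hcard
  omega

lemma stepU_nonneg {N m' : ℕ} (hN : 1 ≤ N) (q : Fin m' → Fin N) (v : Fin (m' + 1) → Fin N)
    (z : ℝ × Bool) : 0 ≤ stepU N m' q v z := by
  classical
  have hN' : (0:ℝ) < N := by exact_mod_cast hN
  have h0 : (0:ℝ) ≤ 1/(N:ℝ) := by positivity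
  unfold stepU
  split_ifs with h hb
  · norm_num
  · linarith [brT_pos hN v (idxOf N m' q z.1)]
  · linarith [brT_le_one hN v (idxOf N m' q z.1)]

lemma stepU_le_one {N m' : ℕ} (hN : 1 ≤ N) (q : Fin m' → Fin N) (v : Fin (m' + 1) → Fin N)
    (z : ℝ × Bool) : stepU N m' q v z ≤ 1 := by
  classical
  unfold stepU
  split_ifs with h hb
  · exact le_rfl
  · exact brT_le_one hN v (idxOf N m' q z.1)
  · linarith [brT_pos hN v (idxOf N m' q z.1)]

lemma stepU_sum {N m' : ℕ} (hN : 1 ≤ N) (q : Fin m' → Fin N) (v : Fin (m' + 1) → Fin N)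
    (x : ℝ) :
    stepU N m' q v (x, true) + stepU N m' q v (x, false) ≤
      (1 + 1/(N:ℝ)) + ∑ j : Fin m', Set.indicator
        (Ico (((q j : ℕ):ℝ)/N) ((((q j : ℕ):ℝ)+1)/N)) (fun _ => 1 - 1/(N:ℝ)) x := by
  classical
  have hN' : (0:ℝ) < N := by exact_mod_cast hN
  have h1 : 1/(N:ℝ) ≤ 1 := by rw [div_le_one hN']; exact_mod_cast hN
  have hnn : ∀ j : Fin m', 0 ≤ Set.indicator
      (Ico (((q j : ℕ):ℝ)/N) ((((q j : ℕ):ℝ)+1)/N)) (fun _ => 1 - 1/(N:ℝ)) x :=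
    fun j => Set.indicator_nonneg (fun _ _ => by linarith) x
  unfold stepU
  simp only []
  by_cases h : ∃ j : Fin m', ((q j : ℕ) : ℝ) / N ≤ x ∧ x < (((q j : ℕ) : ℝ) + 1) / N
  · rw [if_pos h, if_pos h]
    obtain ⟨j₀, hj₀⟩ := h
    have hj : Set.indicator (Ico (((q j₀ : ℕ):ℝ)/N) ((((q j₀ : ℕ):ℝ)+1)/N))
        (fun _ => 1 - 1/(N:ℝ)) x = 1 - 1/(N:ℝ) :=
      Set.indicator_of_mem (Set.mem_Ico.mpr hj₀) _
    have hsum : (1 - 1/(N:ℝ)) ≤ ∑ j : Fin m', Set.indicator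
        (Ico (((q j : ℕ):ℝ)/N) ((((q j : ℕ):ℝ)+1)/N)) (fun _ => 1 - 1/(N:ℝ)) x :=
      le_trans (le_of_eq hj.symm) (Finset.single_le_sum (f := fun j : Fin m' => Set.indicator
          (Ico (((q j : ℕ):ℝ)/N) ((((q j : ℕ):ℝ)+1)/N)) (fun _ => 1 - 1/(N:ℝ)) x)
        (fun j _ => hnn j) (Finset.mem_univ j₀))
    linarith
  · rw [if_neg h, if_neg h]
    have hsum : (0:ℝ) ≤ ∑ j : Fin m', Set.indicator
        (Ico (((q j : ℕ):ℝ)/N) ((((q j : ℕ):ℝ)+1)/N)) (fun _ => 1 - 1/(N:ℝ)) x :=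
      Finset.sum_nonneg fun j _ => hnn j
    rw [if_neg (show ¬(false = true) by simp)]
    rw [if_pos trivial]
    linarith

lemma integral_stepU_le {N m' : ℕ} (hN : 1 ≤ N) (q : Fin m' → Fin N)
    (v : Fin (m' + 1) → Fin N) :
    ∫ z, stepU N m' q v z ∂nuMeas ≤ 1 + ((m':ℝ) + 1) / N := by
  classical
  have hN' : (0:ℝ) < N := by exact_mod_cast hN
  set μ := volume.restrict (Icc (0:ℝ) 1) with hμdef
  haveI : IsFiniteMeasure μ := ⟨by
    rw [Measure.restrict_apply_univ]; simp [Real.volume_Icc]⟩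
  set g := stepU N m' q v with hgdef
  have hgm : Measurable g := measurable_stepU N m' q v
  have hint : ∀ b : Bool, Integrable (fun x => g (x, b)) μ := by
    intro b
    refine Integrable.mono' (integrable_const 1)
      ((hgm.comp (measurable_prodMk_right)).aestronglyMeasurable)
      (ae_of_all _ fun x => ?_)
    rw [Real.norm_eq_abs, abs_le]
    exact ⟨by linarith [stepU_nonneg hN q v (x, b)], stepU_le_one hN q v (x, b)⟩
  have hmap : ∀ b : Bool, Integrable g (μ.map (fun x => (x, b))) := by
    intro b
    rw [integrable_map_measure hgm.aestronglyMeasurable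
      (measurable_prodMk_right).aemeasurable]
    exact hint b
  have hνeq : nuMeas = μ.map (fun x => (x, true)) + μ.map (fun x => (x, false)) := nuMeas_eq
  rw [hνeq, integral_add_measure (hmap true) (hmap false),
    integral_map (measurable_prodMk_right).aemeasurable
      hgm.aestronglyMeasurable,
    integral_map (measurable_prodMk_right).aemeasurable
      hgm.aestronglyMeasurable,
    ← integral_add (hint true) (hint false)]
  set h : ℝ → ℝ := fun x => (1 + 1/(N:ℝ)) + ∑ j : Fin m',
    Set.indicator (Ico (((q j : ℕ):ℝ)/N) ((((q j : ℕ):ℝ)+1)/N)) (fun _ => 1 - 1/(N:ℝ)) x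
    with hhdef
  have hhint1 : Integrable (fun x : ℝ => ∑ j : Fin m',
      Set.indicator (Ico (((q j : ℕ):ℝ)/N) ((((q j : ℕ):ℝ)+1)/N))
        (fun _ => 1 - 1/(N:ℝ)) x) μ := by
    apply integrable_finset_sum
    intro j _
    exact (integrable_const _).indicator measurableSet_Ico
  have hhint : Integrable h μ := (integrable_const _).add hhint1
  have huniv : (μ Set.univ).toReal = 1 := by
    rw [Measure.restrict_apply_univ]; simp [Real.volume_Icc]
  have hIco : ∀ j : Fin m',
      (μ (Ico (((q j : ℕ):ℝ)/N) ((((q j : ℕ):ℝ)+1)/N))).toReal ≤ 1/(N:ℝ) := by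
    intro j
    apply ENNReal.toReal_le_of_le_ofReal (by positivity)
    rw [hμdef, Measure.restrict_apply measurableSet_Ico]
    refine le_trans (measure_mono Set.inter_subset_left) ?_
    rw [Real.volume_Ico]
    have heq : ((((q j : ℕ):ℝ)+1)/N - ((q j : ℕ):ℝ)/N) = 1/(N:ℝ) := by field_simp; ring
    rw [heq]
  calc ∫ x, (g (x, true) + g (x, false)) ∂μ ≤ ∫ x, h x ∂μ :=
        integral_mono ((hint true).add (hint false)) hhint (stepU_sum hN q v)
    _ ≤ 1 + ((m':ℝ) + 1) / N := by
        rw [hhdef]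
        rw [integral_add (integrable_const _) hhint1, integral_const, measureReal_def, huniv, one_smul,
          integral_finset_sum _ (fun j _ => (integrable_const _).indicator measurableSet_Ico)]
        have hterm : ∀ j : Fin m', ∫ x, Set.indicator
            (Ico (((q j : ℕ):ℝ)/N) ((((q j : ℕ):ℝ)+1)/N)) (fun _ => 1 - 1/(N:ℝ)) x ∂μ
            ≤ 1/(N:ℝ) := by
          intro j
          rw [integral_indicator_const _ measurableSet_Ico, smul_eq_mul, measureReal_def]
          have h1 : 1/(N:ℝ) ≤ 1 := by rw [div_le_one hN']; exact_mod_cast hN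
          have := hIco j
          have hnn : (0:ℝ) ≤ (μ (Ico (((q j : ℕ):ℝ)/N) ((((q j : ℕ):ℝ)+1)/N))).toReal :=
            ENNReal.toReal_nonneg
          nlinarith
        have hsum : ∑ j : Fin m', ∫ x, Set.indicator
            (Ico (((q j : ℕ):ℝ)/N) ((((q j : ℕ):ℝ)+1)/N)) (fun _ => 1 - 1/(N:ℝ)) x ∂μ
            ≤ (m':ℝ) * (1/(N:ℝ)) := by
          calc _ ≤ ∑ _j : Fin m', 1/(N:ℝ) := Finset.sum_le_sum fun j _ => hterm j
            _ = (m':ℝ) * (1/(N:ℝ)) := by simp [Finset.sum_const, Finset.card_univ]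
        have heq2 : (1:ℝ) + ((m':ℝ) + 1)/N = (1 + 1/(N:ℝ)) + (m':ℝ) * (1/(N:ℝ)) := by
          field_simp
          ring
        rw [heq2]
        exact add_le_add_right hsum _

lemma exists_bracket {N m' : ℕ} (hN : 1 ≤ N) (f : ℝ → ℝ)
    (hf01 : ∀ x ∈ Icc (0:ℝ) 1, f x ∈ Icc (0:ℝ) 1)
    (P : Fin (m' + 2) → ℝ) (hP : Monotone P) (hP0 : P 0 = 0) (hP1 : P (Fin.last (m'+1)) = 1)
    (hstep : ∀ i : Fin (m'+1), ∀ x ∈ Ioo (P i.castSucc) (P i.succ),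
      ∀ y ∈ Ioo (P i.castSucc) (P i.succ), f x = f y) :
    ∃ q : Fin m' → Fin N, ∃ v : Fin (m'+1) → Fin N,
      ∀ᵐ z ∂nuMeas, ftilde f z ≤ stepU N m' q v z := by
  classical
  have hN' : (0:ℝ) < N := by exact_mod_cast hN
  have hPmem : ∀ i, P i ∈ Icc (0:ℝ) 1 := by
    intro i
    constructor
    · rw [← hP0]; exact hP (Fin.zero_le i)
    · rw [← hP1]; exact hP (Fin.le_last i)
  -- cut data
  set bd : Fin m' → ℝ := fun j => P ⟨(j:ℕ)+1, by omega⟩ with hbddef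
  have hbdmem : ∀ j, bd j ∈ Icc (0:ℝ) 1 := fun j => hPmem _
  have hbdmono : Monotone bd := by
    intro j j' hj
    have h := Fin.le_def.mp hj
    exact hP (Fin.mk_le_mk.mpr (by omega))
  set q : Fin m' → Fin N := fun j =>
    ⟨min (Nat.floor ((N:ℝ) * bd j)) (N-1), by omega⟩ with hqdef
  have hq1 : ∀ j, ((q j : ℕ):ℝ) ≤ N * bd j := by
    intro j
    have h0 : (0:ℝ) ≤ (N:ℝ) * bd j := mul_nonneg (le_of_lt hN') (hbdmem j).1
    calc ((q j : ℕ):ℝ) ≤ ((Nat.floor ((N:ℝ) * bd j) : ℕ):ℝ) := by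
          exact_mod_cast Nat.cast_le.mpr (min_le_left _ _)
      _ ≤ (N:ℝ) * bd j := Nat.floor_le h0
  have hq2 : ∀ j, (N:ℝ) * bd j ≤ ((q j : ℕ):ℝ) + 1 := by
    intro j
    by_cases hfl : Nat.floor ((N:ℝ) * bd j) ≤ N - 1
    · have : ((q j : ℕ)) = Nat.floor ((N:ℝ) * bd j) := by
        simp only [hqdef]; omega
      rw [this]
      exact le_of_lt (Nat.lt_floor_add_one _)
    · have : ((q j : ℕ)) = N - 1 := by simp only [hqdef]; omega
      rw [this]
      have h1 : ((N - 1 : ℕ):ℝ) + 1 = (N:ℝ) := by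
        have : ((N - 1 : ℕ):ℝ) = (N:ℝ) - 1 := by
          rw [Nat.cast_sub hN]; norm_num
        rw [this]; ring
      rw [h1]
      calc (N:ℝ) * bd j ≤ (N:ℝ) * 1 := by
            exact mul_le_mul_of_nonneg_left (hbdmem j).2 (le_of_lt hN')
        _ = (N:ℝ) := mul_one _
  have hqmono : Monotone fun j : Fin m' => ((q j : ℕ):ℝ)/N := by
    intro j j' hj
    have hqq : ((q j : ℕ)) ≤ ((q j' : ℕ)) := by
      simp only [hqdef]
      have hf := Nat.floor_mono (mul_le_mul_of_nonneg_left (hbdmono hj) (le_of_lt hN'))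
      omega
    have : ((q j : ℕ):ℝ) ≤ ((q j' : ℕ):ℝ) := by exact_mod_cast hqq
    exact div_le_div_of_nonneg_right this (le_of_lt hN')
  -- value data
  set mid : Fin (m'+1) → ℝ := fun i => (P i.castSucc + P i.succ)/2 with hmiddef
  have hmidmem : ∀ i, mid i ∈ Icc (0:ℝ) 1 := by
    intro i
    have h1 := hPmem i.castSucc
    have h2 := hPmem i.succ
    constructor
    · simp only [hmiddef]; cases h1; cases h2; linarith
    · simp only [hmiddef]; cases h1; cases h2; linarith
  set a : Fin (m'+1) → ℝ := fun i => f (mid i) with hadef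
  have hamem : ∀ i, a i ∈ Icc (0:ℝ) 1 := fun i => hf01 _ (hmidmem i)
  set v : Fin (m'+1) → Fin N := fun i =>
    ⟨min (N-1) (Nat.floor ((N:ℝ) * a i)), by omega⟩ with hvdef
  have hv1 : ∀ i, (N:ℝ) * a i ≤ ((v i : ℕ):ℝ) + 1 := by
    intro i
    by_cases hfl : Nat.floor ((N:ℝ) * a i) ≤ N - 1
    · have : ((v i : ℕ)) = Nat.floor ((N:ℝ) * a i) := by simp only [hvdef]; omega
      rw [this]
      exact le_of_lt (Nat.lt_floor_add_one _)
    · have : ((v i : ℕ)) = N - 1 := by simp only [hvdef]; omega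
      rw [this]
      have h1 : ((N - 1 : ℕ):ℝ) + 1 = (N:ℝ) := by
        have : ((N - 1 : ℕ):ℝ) = (N:ℝ) - 1 := by
          rw [Nat.cast_sub hN]; norm_num
        rw [this]; ring
      rw [h1]
      calc (N:ℝ) * a i ≤ (N:ℝ) * 1 :=
            mul_le_mul_of_nonneg_left (hamem i).2 (le_of_lt hN')
        _ = (N:ℝ) := mul_one _
  have hv2 : ∀ i, ((v i : ℕ):ℝ) ≤ (N:ℝ) * a i := by
    intro i
    have h0 : (0:ℝ) ≤ (N:ℝ) * a i := mul_nonneg (le_of_lt hN') (hamem i).1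
    calc ((v i : ℕ):ℝ) ≤ ((Nat.floor ((N:ℝ) * a i) : ℕ):ℝ) := by
          exact_mod_cast Nat.cast_le.mpr (min_le_right _ _)
      _ ≤ (N:ℝ) * a i := Nat.floor_le h0
  refine ⟨q, v, ?_⟩
  -- key pointwise estimate
  have key : ∀ x ∈ Icc (0:ℝ) 1, x ∉ range P → ∀ b : Bool,
      ftilde f (x, b) ≤ stepU N m' q v (x, b) := by
    intro x hx hxP b
    by_cases hcell : ∃ j : Fin m', ((q j : ℕ):ℝ)/N ≤ x ∧ x < (((q j : ℕ):ℝ)+1)/N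
    · have hst : stepU N m' q v (x, b) = 1 := by
        simp only [stepU]
        rw [if_pos hcell]
      rw [hst, ftilde]
      obtain ⟨hf0, hf1⟩ := hf01 x hx
      dsimp only
      split_ifs <;> linarith
    · set i := idxOf N m' q x with hidef
      have him : i ≤ m' := idxOf_le_card q x
      have hlow : P ⟨i, by omega⟩ < x := by
        rcases Nat.eq_zero_or_pos i with h0 | hpos
        · have he0 : (⟨i, by omega⟩ : Fin (m'+2)) = 0 := by
            apply Fin.ext; simp [h0]
          rw [he0, hP0]
          have hne : x ≠ P 0 := fun he => hxP ⟨0, he.symm⟩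
          rw [hP0] at hne
          exact lt_of_le_of_ne hx.1 (Ne.symm hne)
        · set j₀ : Fin m' := ⟨i - 1, by omega⟩ with hj₀def
          have hj0 : ((q j₀ : ℕ):ℝ)/N ≤ x := idxOf_le hqmono (show i - 1 < i by omega)
          have hnotc : (((q j₀ : ℕ):ℝ)+1)/N ≤ x := by
            by_contra hlt
            push_neg at hlt
            exact hcell ⟨j₀, hj0, hlt⟩
          have hPbd : P ⟨i, by omega⟩ = bd j₀ := by
            simp only [hbddef]
            congr 1
            apply Fin.ext
            simp [hj₀def]
            omega
          have hbdle : bd j₀ ≤ (((q j₀ : ℕ):ℝ)+1)/N := by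
            rw [le_div_iff₀ hN']
            linarith [hq2 j₀]
          have hle : P ⟨i, by omega⟩ ≤ x := by
            rw [hPbd]; exact le_trans hbdle hnotc
          exact lt_of_le_of_ne hle (fun he => hxP ⟨_, he⟩)
      have hup : x < P ⟨i+1, by omega⟩ := by
        rcases lt_or_eq_of_le him with hlt | heq
        · set j₁ : Fin m' := ⟨i, hlt⟩ with hj₁def
          have hgt : x < ((q j₁ : ℕ):ℝ)/N := idxOf_gt hqmono le_rfl
          have hble : ((q j₁ : ℕ):ℝ)/N ≤ bd j₁ := by
            rw [div_le_iff₀ hN']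
            linarith [hq1 j₁]
          have hPbd : P ⟨i+1, by omega⟩ = bd j₁ := rfl
          exact lt_of_lt_of_le hgt (hPbd ▸ hble)
        · have hlast : (⟨i+1, by omega⟩ : Fin (m'+2)) = Fin.last (m'+1) := by
            apply Fin.ext; simp [heq]
          rw [hlast, hP1]
          have hne : x ≠ 1 := fun he => hxP ⟨Fin.last (m'+1), by rw [hP1, he]⟩
          exact lt_of_le_of_ne hx.2 hne
      set iF : Fin (m'+1) := ⟨i, by omega⟩ with hiFdef
      have hcs : P iF.castSucc = P ⟨i, by omega⟩ := by congr 1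
      have hsc : P iF.succ = P ⟨i+1, by omega⟩ := by congr 1
      have hIoo : P iF.castSucc < P iF.succ := by
        rw [hcs, hsc]; exact lt_trans hlow hup
      have hmidIoo : mid iF ∈ Ioo (P iF.castSucc) (P iF.succ) := by
        constructor
        · simp only [hmiddef]; linarith
        · simp only [hmiddef]; linarith
      have hxIoo : x ∈ Ioo (P iF.castSucc) (P iF.succ) := by
        rw [mem_Ioo, hcs, hsc]; exact ⟨hlow, hup⟩
      have hfx : f x = a iF := hstep iF x hxIoo (mid iF) hmidIoo
      have hbrT : brT N m' v (idxOf N m' q x) = (((v iF : ℕ):ℝ)+1)/N := by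
        have he : (⟨min (idxOf N m' q x) m', Nat.lt_succ_of_le (min_le_right _ _)⟩ :
            Fin (m'+1)) = iF := by
          apply Fin.ext
          show min i m' = i
          omega
        unfold brT
        rw [he]
      have hVa1 : a iF ≤ (((v iF : ℕ):ℝ)+1)/N := by
        rw [le_div_iff₀ hN']
        have := hv1 iF
        linarith [mul_comm (a iF) (N:ℝ)]
      have hVa2 : (((v iF : ℕ):ℝ)+1)/N ≤ a iF + 1/(N:ℝ) := by
        rw [div_le_iff₀ hN']
        have hexp : (a iF + 1/(N:ℝ)) * N = (N:ℝ) * a iF + 1 := by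
          field_simp
        rw [hexp]
        linarith [hv2 iF]
      cases b
      · have hst : stepU N m' q v (x, false) =
            1 + 1/(N:ℝ) - brT N m' v (idxOf N m' q x) := by
          simp only [stepU]
          rw [if_neg hcell]
          norm_num
        rw [hst, hbrT]
        show 1 - f x ≤ _
        rw [hfx]
        linarith
      · have hst : stepU N m' q v (x, true) = brT N m' v (idxOf N m' q x) := by
          simp only [stepU]
          rw [if_neg hcell]
          norm_num
        rw [hst, hbrT]
        show f x ≤ _
        rw [hfx]
        exact hVa1
  -- pass to the a.e. statement
  have h1 : volume.restrict (Icc (0:ℝ) 1) (range P ∪ (Icc (0:ℝ) 1)ᶜ) = 0 := by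
    apply measure_union_null
    · exact Set.Countable.measure_zero (Set.countable_range P) _
    · rw [Measure.restrict_apply measurableSet_Icc.compl]
      simp
  have hnull : nuMeas ((range P ∪ (Icc (0:ℝ) 1)ᶜ) ×ˢ (univ : Set Bool)) = 0 := by
    rw [nuMeas, Measure.prod_prod, h1, zero_mul]
  rw [ae_iff]
  apply measure_mono_null ?_ hnull
  intro z hz
  rw [Set.mem_setOf_eq] at hz
  refine Set.mem_prod.mpr ⟨?_, Set.mem_univ _⟩
  by_contra hmem
  rw [Set.mem_union, not_or, Set.notMem_compl_iff] at hmem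
  exact hz (by simpa using key z.1 hmem.2 hmem.1 z.2)

end BracketAux

/-- The δ-upper bracketing entropy of the class `F̃_m` of binary-regression densities whose
regression function is a step function with at most `m-1` change-points is at most
`(2m-1) log⌈m/δ⌉`. -/
theorem bracketing_entropy_bound (m : ℕ) (hm : 1 ≤ m) (δ : ℝ) (hδ : 0 < δ) :
    ∃ B : Finset ((ℝ × Bool) → ℝ),
      (∀ f : ℝ → ℝ, (∃ k : ℕ, 1 ≤ k ∧ k ≤ m ∧ IsStepWith k f) →
          (∀ x ∈ Icc (0:ℝ) 1, f x ∈ Icc (0:ℝ) 1) →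
          ∃ u ∈ B, ∀ᵐ z ∂nuMeas, ftilde f z ≤ u z) ∧
      (∀ u ∈ B, ∫ z, u z ∂nuMeas ≤ 1 + δ) ∧
      Real.log B.card ≤ (2 * (m : ℝ) - 1) * Real.log (Nat.ceil ((m : ℝ) / δ)) := by
  classical
  open BracketAux in
  set N : ℕ := Nat.ceil ((m : ℝ) / δ) with hNdef
  have hN : 1 ≤ N := by
    rw [hNdef]
    exact Nat.one_le_iff_ne_zero.mpr (by
      intro h0
      have := Nat.ceil_eq_zero.mp h0
      have hpos : (0:ℝ) < (m:ℝ)/δ := by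
        apply div_pos _ hδ
        exact_mod_cast hm
      linarith)
  have hN' : (0:ℝ) < N := by exact_mod_cast hN
  set m' : ℕ := m - 1 with hm'def
  have hmm : m = m' + 1 := by omega
  refine ⟨Finset.image
    (fun p : (Fin m' → Fin N) × (Fin (m'+1) → Fin N) =>
      BracketAux.stepU N m' p.1 p.2) Finset.univ, ?_, ?_, ?_⟩
  · -- bracketing
    intro f hf hf01
    obtain ⟨k, hk1, hkm, p, hpmono, hp0, hp1, hpstep⟩ := hf
    have hkm' : k ≤ m' + 1 := by omega
    set P : Fin (m' + 2) → ℝ := fun i => p ⟨min (i:ℕ) k, by omega⟩ with hPdef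
    have hPmono : Monotone P := by
      intro i i' hi
      have h := Fin.le_def.mp hi
      exact hpmono (Fin.mk_le_mk.mpr (by omega))
    have hP0 : P 0 = 0 := by
      simp only [hPdef]
      have : (⟨min ((0 : Fin (m'+2)):ℕ) k, by omega⟩ : Fin (k+1)) = 0 := by
        apply Fin.ext; simp
      rw [this, hp0]
    have hP1 : P (Fin.last (m'+1)) = 1 := by
      simp only [hPdef]
      have : (⟨min ((Fin.last (m'+1)):ℕ) k, by omega⟩ : Fin (k+1)) = Fin.last k := by
        apply Fin.ext; simp; omega
      rw [this, hp1]
    have hPstep : ∀ i : Fin (m'+1), ∀ x ∈ Ioo (P i.castSucc) (P i.succ),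
        ∀ y ∈ Ioo (P i.castSucc) (P i.succ), f x = f y := by
      intro i x hx y hy
      by_cases hik : (i:ℕ) < k
      · have e1 : P i.castSucc = p ((⟨(i:ℕ), hik⟩ : Fin k).castSucc) := by
          apply congrArg p
          apply Fin.ext
          simp [Fin.coe_castSucc]
          omega
        have e2 : P i.succ = p ((⟨(i:ℕ), hik⟩ : Fin k).succ) := by
          apply congrArg p
          apply Fin.ext
          simp [Fin.val_succ]
          omega
        rw [e1, e2] at hx hy
        exact hpstep ⟨(i:ℕ), hik⟩ x hx y hy
      · exfalso
        have e1 : P i.castSucc = p ⟨k, by omega⟩ := by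
          apply congrArg p
          apply Fin.ext
          simp [Fin.coe_castSucc]
          omega
        have e2 : P i.succ = p ⟨k, by omega⟩ := by
          apply congrArg p
          apply Fin.ext
          simp [Fin.val_succ]
          omega
        rw [e1, e2] at hx
        exact lt_irrefl _ (lt_trans hx.1 hx.2)
    obtain ⟨q, v, hae⟩ := BracketAux.exists_bracket hN f hf01 P hPmono hP0 hP1 hPstep
    exact ⟨BracketAux.stepU N m' q v,
      Finset.mem_image.mpr ⟨(q, v), Finset.mem_univ _, rfl⟩, hae⟩
  · -- integral bound
    intro u hu
    obtain ⟨pp, _, hpe⟩ := Finset.mem_image.mp hu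
    rw [← hpe]
    refine le_trans (BracketAux.integral_stepU_le hN pp.1 pp.2) ?_
    have hcast : ((m':ℝ) + 1) = (m:ℝ) := by
      rw [hm'def]
      have : ((m - 1 : ℕ):ℝ) = (m:ℝ) - 1 := by
        rw [Nat.cast_sub hm]; norm_num
      rw [this]; ring
    rw [hcast]
    have hceil : (m:ℝ)/δ ≤ (N:ℝ) := by
      rw [hNdef]; exact Nat.le_ceil _
    have : (m:ℝ) ≤ (N:ℝ) * δ := by
      rw [div_le_iff₀ hδ] at hceil
      linarith
    have hfrac : (m:ℝ)/N ≤ δ := by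
      rw [div_le_iff₀ hN']
      linarith
    linarith
  · -- cardinality bound
    have hcard : (Finset.image
        (fun p : (Fin m' → Fin N) × (Fin (m'+1) → Fin N) =>
          BracketAux.stepU N m' p.1 p.2) Finset.univ).card ≤ N ^ (2 * m - 1) := by
      refine le_trans (Finset.card_image_le) ?_
      rw [Finset.card_univ]
      have : Fintype.card ((Fin m' → Fin N) × (Fin (m'+1) → Fin N)) =
          N ^ m' * N ^ (m' + 1) := by
        rw [Fintype.card_prod, Fintype.card_fun, Fintype.card_fun]
        simp
      rw [this, ← pow_add]
      apply le_of_eq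
      congr 1
      omega
    haveI : NeZero N := ⟨by omega⟩
    have hBpos : 0 < (Finset.image
        (fun p : (Fin m' → Fin N) × (Fin (m'+1) → Fin N) =>
          BracketAux.stepU N m' p.1 p.2) Finset.univ).card :=
      Finset.card_pos.mpr (Finset.Nonempty.image Finset.univ_nonempty _)
    have hlog := Real.log_le_log (by exact_mod_cast hBpos)
      (show ((Finset.image (fun p : (Fin m' → Fin N) × (Fin (m'+1) → Fin N) =>
        BracketAux.stepU N m' p.1 p.2) Finset.univ).card : ℝ) ≤ (N:ℝ) ^ (2 * m - 1) by
        exact_mod_cast hcard)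
    refine le_trans hlog ?_
    rw [Real.log_pow]
    apply le_of_eq
    congr 1
    have h2m : 1 ≤ 2 * m := by omega
    have : ((2 * m - 1 : ℕ):ℝ) = 2 * (m:ℝ) - 1 := by
      rw [Nat.cast_sub h2m]; push_cast; ring
    rw [this]
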